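/- arXiv:1503.08535 — 5 statements merged into one kernel-verified Lean document; each statement's English description precedes it below -/
import Mathlib

section
/- (Additive property of the negative binomial, Theorem 1, finite-family case.) Let I be a nonempty finite index set, p ∈ (0,1), and r : I → ℝ with r i > 0 for all i. Then for every n ∈ ℕ, summing over all functions g : I → ℕ with Σ_{i∈I} g i = n, one has Σ_g ∏_{i∈I} f_{r i, p}(g i) = f_{Σ_{i∈I} r i, p}(n). That is, if the X_i are independent negative binomial with parameters r_i and a common p, then Σ X_i is negative binomial with parameters Σ r_i and p. -/
/-- The negative binomial pmf with real shape `r > 0` and success parameter `p ∈ (0,1)`: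
`f_{r,p}(n) = Γ(n+r) / (n! · Γ(r)) · pⁿ · (1−p)ʳ`. -/
noncomputable def nbPMF (r p : ℝ) (n : ℕ) : ℝ :=
  Real.Gamma ((n : ℝ) + r) / ((n.factorial : ℝ) * Real.Gamma r) * p ^ n * (1 - p) ^ r

open Finset Polynomial PowerSeries

/-- The coefficient `(r)ₙ / n!` (ascending factorial over factorial). -/
noncomputable def nbCoef (r : ℝ) (n : ℕ) : ℝ :=
  (ascPochhammer ℝ n).eval r / n.factorial

lemma gamma_ascPochhammer (r : ℝ) (hr : 0 < r) (n : ℕ) :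
    Real.Gamma ((n : ℝ) + r) = (ascPochhammer ℝ n).eval r * Real.Gamma r := by
  induction n with
  | zero => simp
  | succ n ih =>
    have h : ((n + 1 : ℕ) : ℝ) + r = ((n : ℝ) + r) + 1 := by push_cast; ring
    rw [h, Real.Gamma_add_one (by positivity), ih, ascPochhammer_succ_eval]
    ring

lemma desc_neg (x : ℝ) (k : ℕ) :
    (descPochhammer ℤ k).smeval (-x) = (-1 : ℝ) ^ k * (ascPochhammer ℕ k).smeval x := by
  have h := Polynomial.ascPochhammer_smeval_neg_eq_descPochhammer (R := ℝ) (-x) k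
  rw [neg_neg] at h
  rw [h, Units.smul_def, Int.coe_negOnePow_natCast, zsmul_eq_mul, ← mul_assoc]
  push_cast
  rw [← mul_pow]
  simp

/-- Chu–Vandermonde identity for ascending Pochhammer over ℝ. -/
lemma ascPochhammer_vandermonde (a b : ℝ) (n : ℕ) :
    (ascPochhammer ℝ n).eval (a + b) =
      ∑ ij ∈ antidiagonal n,
        (n.choose ij.1 : ℝ) * ((ascPochhammer ℝ ij.1).eval a *
          (ascPochhammer ℝ ij.2).eval b) := by
  have key := Ring.descPochhammer_smeval_add (R := ℝ) (r := -a) (s := -b) n (Commute.all _ _)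
  have hn : (ascPochhammer ℕ n).smeval (a + b) =
      (-1 : ℝ) ^ n * (descPochhammer ℤ n).smeval (-a + -b) := by
    have := desc_neg (a + b) n
    rw [neg_add] at this
    rw [this, ← mul_assoc, ← mul_pow]
    simp
  rw [← Polynomial.ascPochhammer_smeval_eq_eval, hn, key, Finset.mul_sum]
  refine Finset.sum_congr rfl fun ij hij => ?_
  have hsum : ij.1 + ij.2 = n := Finset.HasAntidiagonal.mem_antidiagonal.mp hij
  rw [desc_neg a ij.1, desc_neg b ij.2, ← Polynomial.ascPochhammer_smeval_eq_eval,
    ← Polynomial.ascPochhammer_smeval_eq_eval, ← hsum]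
  have h1 : ((-1 : ℝ)) ^ (ij.1 + ij.2) * ((-1) ^ ij.1 * (-1) ^ ij.2) = 1 := by
    rw [pow_add, mul_mul_mul_comm, ← mul_pow, ← mul_pow]; simp
  calc (-1 : ℝ) ^ (ij.1 + ij.2) *
        ((ij.1 + ij.2).choose ij.1 * ((-1 : ℝ) ^ ij.1 * (ascPochhammer ℕ ij.1).smeval a *
          ((-1 : ℝ) ^ ij.2 * (ascPochhammer ℕ ij.2).smeval b)))
      = ((-1 : ℝ)) ^ (ij.1 + ij.2) * ((-1) ^ ij.1 * (-1) ^ ij.2) *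
        ((ij.1 + ij.2).choose ij.1 * ((ascPochhammer ℕ ij.1).smeval a *
          (ascPochhammer ℕ ij.2).smeval b)) := by ring
    _ = _ := by rw [h1, one_mul]

lemma nbCoef_conv (a b : ℝ) (n : ℕ) :
    ∑ ij ∈ antidiagonal n, nbCoef a ij.1 * nbCoef b ij.2 = nbCoef (a + b) n := by
  unfold nbCoef
  rw [ascPochhammer_vandermonde, Finset.sum_div]
  refine Finset.sum_congr rfl fun ij hij => ?_
  have hsum : ij.1 + ij.2 = n := Finset.HasAntidiagonal.mem_antidiagonal.mp hij
  have h1 : ij.1 ≤ n := by omega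
  have h2 : n - ij.1 = ij.2 := by omega
  have hfac : ((n.choose ij.1 : ℝ)) * ij.1.factorial * ij.2.factorial = n.factorial := by
    rw_mod_cast [← h2, Nat.choose_mul_factorial_mul_factorial h1]
  have f1 : (ij.1.factorial : ℝ) ≠ 0 := by positivity
  have f2 : (ij.2.factorial : ℝ) ≠ 0 := by positivity
  have fn : (n.factorial : ℝ) ≠ 0 := by positivity
  field_simp
  rw [← hfac]
  ring

/-- The generating power series of `nbCoef r`. -/
noncomputable def nbSeries (r : ℝ) : PowerSeries ℝ := PowerSeries.mk (nbCoef r)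

lemma nbSeries_add (a b : ℝ) : nbSeries (a + b) = nbSeries a * nbSeries b := by
  ext n
  rw [PowerSeries.coeff_mul]
  simp only [nbSeries, coeff_mk]
  exact (nbCoef_conv a b n).symm

lemma nbSeries_sum {I : Type*} [DecidableEq I] (s : Finset I) (r : I → ℝ) :
    nbSeries (∑ i ∈ s, r i) = ∏ i ∈ s, nbSeries (r i) := by
  induction s using Finset.induction with
  | empty =>
    simp only [Finset.sum_empty, Finset.prod_empty]
    ext n
    simp [nbSeries, nbCoef, ascPochhammer_eval_zero, PowerSeries.coeff_one]
    split <;> simp_all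
  | insert _ _ h ih =>
    rw [Finset.sum_insert h, Finset.prod_insert h, nbSeries_add, ih]

lemma nbCoef_conv_pi (I : Type*) [Fintype I] [DecidableEq I] (r : I → ℝ) (n : ℕ) :
    ∑ g ∈ (Fintype.piFinset fun _ : I => Finset.range (n + 1)).filter
        (fun g => ∑ i, g i = n),
      ∏ i, nbCoef (r i) (g i) = nbCoef (∑ i, r i) n := by
  have h1 : nbCoef (∑ i, r i) n = PowerSeries.coeff n (nbSeries (∑ i, r i)) :=
    (PowerSeries.coeff_mk n (nbCoef (∑ i, r i))).symm
  rw [h1, nbSeries_sum, PowerSeries.coeff_prod]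
  simp only [nbSeries, coeff_mk]
  symm
  refine Finset.sum_nbij' (fun l : I →₀ ℕ => ⇑l)
    (fun g : I → ℕ => Finsupp.equivFunOnFinite.symm g) ?_ ?_ ?_ ?_ ?_
  · intro l hl
    rw [Finset.mem_finsuppAntidiag] at hl
    simp only [Finset.mem_filter, Fintype.mem_piFinset, Finset.mem_range]
    constructor
    · intro i
      have h2 : ∑ j, l j = n := hl.1
      have : l i ≤ ∑ j, l j :=
        Finset.single_le_sum (fun j _ => Nat.zero_le _) (Finset.mem_univ i)
      omega
    · exact hl.1
  · intro g hg
    simp only [Finset.mem_filter, Fintype.mem_piFinset, Finset.mem_range] at hg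
    rw [Finset.mem_finsuppAntidiag]
    constructor
    · simpa [Finsupp.coe_equivFunOnFinite_symm] using hg.2
    · exact Finset.subset_univ _
  · intro l _; exact Finsupp.equivFunOnFinite_symm_coe l
  · intro g _; ext i; simp [Finsupp.coe_equivFunOnFinite_symm]
  · intro l _
    refine Finset.prod_congr rfl fun i _ => ?_
    rfl

lemma nbPMF_eq (r p : ℝ) (hr : 0 < r) (n : ℕ) :
    nbPMF r p n = nbCoef r n * p ^ n * (1 - p) ^ r := by
  have hΓ : Real.Gamma r ≠ 0 := (Real.Gamma_pos_of_pos hr).ne'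
  rw [nbPMF, nbCoef, gamma_ascPochhammer r hr, mul_comm ((n.factorial : ℝ)),
    mul_comm (eval r (ascPochhammer ℝ n)) (Real.Gamma r), mul_div_mul_left _ _ hΓ]

/-- Additive property of the negative binomial distribution (finite-family case):
summing over all functions `g : I → ℕ` with `∑ i, g i = n` (all such functions satisfy
`g i ≤ n`, hence lie in the pi-finset of `Finset.range (n+1)`), the convolution of the
pmfs `f_{r i, p}` equals `f_{∑ i, r i, p}`. -/
theorem negBinomial_sum_of_convolution (I : Type*) [Fintype I] [DecidableEq I] [Nonempty I]
    (p : ℝ) (hp : p ∈ Set.Ioo (0:ℝ) 1) (r : I → ℝ) (hr : ∀ i, 0 < r i) (n : ℕ) :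
    ∑ g ∈ (Fintype.piFinset fun _ : I => Finset.range (n + 1)).filter
        (fun g => ∑ i, g i = n),
      ∏ i, nbPMF (r i) p (g i) = nbPMF (∑ i, r i) p n := by
  have hR : 0 < ∑ i, r i :=
    Finset.sum_pos (fun i _ => hr i) Finset.univ_nonempty
  have h1p : (0 : ℝ) < 1 - p := by have := hp.2; linarith
  rw [nbPMF_eq _ _ hR]
  rw [← nbCoef_conv_pi I r n, Finset.sum_mul, Finset.sum_mul]
  refine Finset.sum_congr rfl fun g hg => ?_
  simp only [Finset.mem_filter] at hg
  calc ∏ i, nbPMF (r i) p (g i)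
      = ∏ i, (nbCoef (r i) (g i) * p ^ (g i) * (1 - p) ^ (r i)) :=
        Finset.prod_congr rfl fun i _ => nbPMF_eq _ _ (hr i) _
    _ = (∏ i, nbCoef (r i) (g i)) * (∏ i, p ^ (g i)) * ∏ i, (1 - p) ^ (r i) := by
        rw [Finset.prod_mul_distrib, Finset.prod_mul_distrib]
    _ = (∏ i, nbCoef (r i) (g i)) * p ^ n * (1 - p) ^ (∑ i, r i) := by
        rw [Finset.prod_pow_eq_pow_sum, hg.2, Real.rpow_sum_of_pos h1p]
end

section
/- (Normalization of the negative binomial pmf with real shape parameter.) For every real r > 0 and p ∈ (0,1), the series Σ_{n=0}^{∞} f_{r,p}(n) converges and equals 1, i.e. Σ_{n=0}^{∞} Γ(n+r) / (n! · Γ(r)) · pⁿ · (1−p)ʳ = 1. -/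
open MeasureTheory Real Set

lemma lint_gamma_aux {a c : ℝ} (ha : 0 < a) (hc : 0 < c) :
    ∫⁻ t in Ioi (0:ℝ), ENNReal.ofReal (t ^ (a - 1) * Real.exp (-(c * t)))
      = ENNReal.ofReal ((1 / c) ^ a * Real.Gamma a) := by
  have hI : ∫ t in Ioi (0:ℝ), t ^ (a - 1) * Real.exp (-(c * t))
      = (1 / c) ^ a * Real.Gamma a :=
    Real.integral_rpow_mul_exp_neg_mul_Ioi ha hc
  have hmeas : AEStronglyMeasurable (fun t : ℝ => t ^ (a - 1) * Real.exp (-(c * t)))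
      (volume.restrict (Ioi 0)) := by
    apply Measurable.aestronglyMeasurable
    fun_prop
  have hnn : 0 ≤ᵐ[volume.restrict (Ioi (0:ℝ))] fun t => t ^ (a - 1) * Real.exp (-(c * t)) := by
    filter_upwards [ae_restrict_mem measurableSet_Ioi] with t ht
    have h0 : (0:ℝ) < t := ht
    positivity
  have key := integral_eq_lintegral_of_nonneg_ae hnn hmeas
  rw [hI] at key
  have hpos : 0 < (1 / c) ^ a * Real.Gamma a := by positivity
  have hLne : (∫⁻ t in Ioi (0:ℝ), ENNReal.ofReal (t ^ (a - 1) * Real.exp (-(c * t)))) ≠ ⊤ := by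
    intro h
    rw [h] at key
    simp at key
    rcases key with h' | h'
    · exact absurd h' (by positivity : (0:ℝ) < c⁻¹ ^ a).ne'
    · exact absurd h' (Real.Gamma_pos_of_pos ha).ne'
  rw [← ENNReal.ofReal_toReal hLne, ← key]

/-- Normalization of the negative binomial pmf with real shape parameter:
`Σ_{n=0}^{∞} f_{r,p}(n)` converges and equals `1`. -/
theorem negBinomial_hasSum_one (r p : ℝ) (hr : 0 < r) (hp : p ∈ Set.Ioo (0:ℝ) 1) :
    HasSum (fun n : ℕ => nbPMF r p n) 1 := by
  obtain ⟨hp0, hp1⟩ := hp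
  have hcpos : 0 < 1 - p := by linarith
  have hΓr : 0 < Real.Gamma r := Real.Gamma_pos_of_pos hr
  set a : ℕ → ℝ := fun n => Real.Gamma ((n:ℝ) + r) / n.factorial * p ^ n with ha
  have hann : ∀ n, 0 ≤ a n := fun n => by
    have h1 : 0 < Real.Gamma ((n:ℝ) + r) := Real.Gamma_pos_of_pos (by positivity)
    have h2 : (0:ℝ) < n.factorial := by positivity
    positivity
  -- each term as a lintegral
  have hterm : ∀ n : ℕ, ENNReal.ofReal (a n)
      = ∫⁻ t in Ioi (0:ℝ), ENNReal.ofReal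
          (p ^ n / n.factorial * (t ^ ((n:ℝ) + r - 1) * Real.exp (-(1 * t)))) := by
    intro n
    have h1 : (0:ℝ) < (n:ℝ) + r := by positivity
    have hg := lint_gamma_aux h1 one_pos
    have hcnn : (0:ℝ) ≤ p ^ n / n.factorial := by positivity
    calc ENNReal.ofReal (a n)
        = ENNReal.ofReal (p ^ n / n.factorial) *
            ENNReal.ofReal ((1/1:ℝ) ^ ((n:ℝ) + r) * Real.Gamma ((n:ℝ) + r)) := by
          rw [← ENNReal.ofReal_mul hcnn]
          congr 1
          norm_num [ha]
          ring
      _ = ENNReal.ofReal (p ^ n / n.factorial) *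
            ∫⁻ t in Ioi (0:ℝ), ENNReal.ofReal (t ^ ((n:ℝ) + r - 1) * Real.exp (-(1 * t))) := by
          rw [hg]
      _ = _ := by
          rw [← lintegral_const_mul' _ _ ENNReal.ofReal_ne_top]
          congr 1 with t
          rw [← ENNReal.ofReal_mul hcnn]
  -- sum of lintegrals = lintegral of the sum
  have hmeasn : ∀ n : ℕ, AEMeasurable (fun t : ℝ =>
      ENNReal.ofReal (p ^ n / n.factorial * (t ^ ((n:ℝ) + r - 1) * Real.exp (-(1 * t)))))
      (volume.restrict (Ioi 0)) := by
    intro n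
    apply Measurable.aemeasurable
    apply Measurable.ennreal_ofReal
    fun_prop
  have hsum1 : (∑' n, ENNReal.ofReal (a n))
      = ∫⁻ t in Ioi (0:ℝ), ∑' (n : ℕ), ENNReal.ofReal
          (p ^ n / n.factorial * (t ^ ((n:ℝ) + r - 1) * Real.exp (-(1 * t)))) := by
    simp_rw [hterm]
    exact (lintegral_tsum hmeasn).symm
  -- pointwise sum
  have hpt : ∀ t ∈ Ioi (0:ℝ), (∑' (n : ℕ), ENNReal.ofReal
        (p ^ n / n.factorial * (t ^ ((n:ℝ) + r - 1) * Real.exp (-(1 * t)))))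
      = ENNReal.ofReal (t ^ (r - 1) * Real.exp (-((1 - p) * t))) := by
    intro t ht
    have ht0 : (0:ℝ) < t := ht
    have hS : HasSum (fun n : ℕ => p ^ n / n.factorial * (t ^ ((n:ℝ) + r - 1) * Real.exp (-(1 * t))))
        (t ^ (r - 1) * Real.exp (-((1 - p) * t))) := by
      have h := (NormedSpace.expSeries_div_hasSum_exp (p * t)).mul_right
        (t ^ (r - 1) * Real.exp (-t))
      rw [← Real.exp_eq_exp_ℝ] at h
      have heq : (fun n : ℕ => p ^ n / n.factorial * (t ^ ((n:ℝ) + r - 1) * Real.exp (-(1 * t))))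
          = fun n : ℕ => (p * t) ^ n / n.factorial * (t ^ (r - 1) * Real.exp (-t)) := by
        funext n
        have hre : t ^ ((n:ℝ) + r - 1) = t ^ (n:ℕ) * t ^ (r - 1) := by
          rw [← Real.rpow_natCast t n, ← Real.rpow_add ht0]
          ring_nf
        rw [hre, mul_pow]
        ring_nf
      have hval' : t ^ (r - 1) * Real.exp (-((1 - p) * t))
          = Real.exp (p * t) * (t ^ (r - 1) * Real.exp (-t)) := by
        rw [← mul_assoc, mul_comm (Real.exp (p * t)) (t ^ (r - 1)), mul_assoc, ← Real.exp_add]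
        ring_nf
      rw [heq, hval']
      exact h
    rw [← hS.tsum_eq, ENNReal.ofReal_tsum_of_nonneg (fun n => by positivity) hS.summable]
  have hsum2 : (∑' n, ENNReal.ofReal (a n))
      = ENNReal.ofReal ((1 / (1 - p)) ^ r * Real.Gamma r) := by
    rw [hsum1, setLIntegral_congr_fun measurableSet_Ioi hpt,
      lint_gamma_aux hr hcpos]
  -- extract real summability and value
  have hfin : (∑' n, ENNReal.ofReal (a n)) ≠ ⊤ := by
    rw [hsum2]; exact ENNReal.ofReal_ne_top
  have hsummable : Summable a := by
    have := ENNReal.summable_toReal hfin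
    refine this.congr fun n => ?_
    exact ENNReal.toReal_ofReal (hann n)
  have htsum : (∑' n, a n) = (1 / (1 - p)) ^ r * Real.Gamma r := by
    calc (∑' n, a n) = ∑' n, (ENNReal.ofReal (a n)).toReal :=
          tsum_congr fun n => (ENNReal.toReal_ofReal (hann n)).symm
      _ = (∑' n, ENNReal.ofReal (a n)).toReal :=
          (ENNReal.tsum_toReal_eq fun n => ENNReal.ofReal_ne_top).symm
      _ = _ := by rw [hsum2, ENNReal.toReal_ofReal (by positivity)]
  have hA : HasSum a ((1 / (1 - p)) ^ r * Real.Gamma r) := htsum ▸ hsummable.hasSum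
  have key := hA.mul_right ((1 - p) ^ r / Real.Gamma r)
  have hval : (1 / (1 - p)) ^ r * Real.Gamma r * ((1 - p) ^ r / Real.Gamma r) = 1 := by
    have h2 : ((1:ℝ) / (1 - p)) ^ r * (1 - p) ^ r = 1 := by
      rw [← Real.mul_rpow (by positivity) hcpos.le, one_div_mul_cancel hcpos.ne', Real.one_rpow]
    field_simp
    linear_combination h2
  rw [hval] at key
  refine key.congr_fun fun n => ?_
  simp only [ha, nbPMF]
  have h2 : (0:ℝ) < n.factorial := by positivity
  field_simp
end

section
/- (Closed form of the convolution powers of the logarithmic pmf.) Let p ∈ (0,1) and write L = −log(1−p) > 0. For all j, x ∈ ℕ, the j-fold convolution power of the logarithmic pmf satisfies g_p^{*j}(x) = j! · c(x,j) · pˣ / (x! · Lʲ), where c(x,j) is the unsigned Stirling number of the first kind. -/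
/-- The logarithmic pmf with parameter `p ∈ (0,1)`:
`g_p(k) = −p^k / (k · log(1−p))` for `k ≥ 1` and `g_p(0) = 0`. -/
noncomputable def logPMF (p : ℝ) (k : ℕ) : ℝ :=
  if k = 0 then 0 else -(p ^ k) / ((k : ℝ) * Real.log (1 - p))

/-- The `j`-fold convolution power of the logarithmic pmf:
`g_p^{*0}(x) = 1` if `x = 0` and `0` otherwise, and
`g_p^{*(j+1)}(x) = Σ_{k=0}^{x} g_p^{*j}(k) · g_p(x−k)`. -/
noncomputable def logConvPow (p : ℝ) : ℕ → ℕ → ℝ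
  | 0, x => if x = 0 then 1 else 0
  | j + 1, x => ∑ k ∈ Finset.range (x + 1), logConvPow p j k * logPMF p (x - k)

open PowerSeries

/-- The power series `Σ_{n≥1} Xⁿ/n = -log(1-X)` over `ℝ`. -/
noncomputable def ellPS : PowerSeries ℝ :=
  PowerSeries.mk fun n => if n = 0 then 0 else (n : ℝ)⁻¹

lemma coeff_ellPS (n : ℕ) :
    PowerSeries.coeff n ellPS = if n = 0 then 0 else (n : ℝ)⁻¹ :=
  PowerSeries.coeff_mk _ _

lemma deriv_ellPS : d⁄dX ℝ ellPS * (1 - PowerSeries.X) = 1 := by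
  ext n
  rw [mul_sub, mul_one, map_sub]
  cases n with
  | zero =>
    simp [PowerSeries.coeff_derivative, coeff_ellPS]
  | succ n =>
    rw [PowerSeries.coeff_succ_mul_X]
    simp [PowerSeries.coeff_derivative, coeff_ellPS, PowerSeries.coeff_one,
      mul_comm, Nat.cast_add]
    field_simp
    ring

lemma stirling_coeff_zero (n : ℕ) :
    (ascPochhammer ℕ n).coeff 0 = if n = 0 then 1 else 0 := by
  induction n with
  | zero => simp [ascPochhammer_zero]
  | succ n ih =>
    rw [ascPochhammer_succ_right, Polynomial.mul_coeff_zero, ih]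
    simp [Polynomial.coeff_natCast_ite]

lemma stirling_rec (n j : ℕ) :
    (ascPochhammer ℕ (n + 1)).coeff (j + 1) =
      (ascPochhammer ℕ n).coeff j + n * (ascPochhammer ℕ n).coeff (j + 1) := by
  rw [ascPochhammer_succ_right, mul_add, Polynomial.coeff_add, Polynomial.coeff_mul_X,
    ← Polynomial.C_eq_natCast, Polynomial.coeff_mul_C, mul_comm]
  simp

lemma ell_pow_rec (j n : ℕ) :
    ((n : ℝ) + 1) * PowerSeries.coeff (n + 1) (ellPS ^ (j + 1)) =
      (n : ℝ) * PowerSeries.coeff n (ellPS ^ (j + 1)) +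
        ((j : ℝ) + 1) * PowerSeries.coeff n (ellPS ^ j) := by
  have h1 : d⁄dX ℝ (ellPS ^ (j + 1)) * (1 - PowerSeries.X) = (j + 1) • ellPS ^ j := by
    rw [Derivation.leibniz_pow, Nat.succ_sub_one, smul_mul_assoc, smul_eq_mul, mul_assoc,
      deriv_ellPS, mul_one]
  have h2 := congrArg (PowerSeries.coeff n) h1
  rw [mul_sub, mul_one, map_sub, map_nsmul] at h2
  rw [PowerSeries.coeff_derivative] at h2
  cases n with
  | zero =>
    rw [PowerSeries.coeff_zero_mul_X] at h2
    rw [nsmul_eq_mul] at h2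
    push_cast at h2 ⊢
    linarith [h2]
  | succ n =>
    rw [PowerSeries.coeff_succ_mul_X, PowerSeries.coeff_derivative] at h2
    rw [nsmul_eq_mul] at h2
    push_cast at h2 ⊢
    linarith [h2]

lemma coeff_ellPS_pow (j n : ℕ) :
    PowerSeries.coeff n (ellPS ^ j) =
      (j.factorial : ℝ) * ((ascPochhammer ℕ n).coeff j : ℝ) / (n.factorial : ℝ) := by
  induction j generalizing n with
  | zero =>
    rw [pow_zero, PowerSeries.coeff_one, stirling_coeff_zero]
    split <;> simp_all [Nat.factorial_ne_zero]
  | succ j ih =>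
    induction n with
    | zero =>
      have : PowerSeries.constantCoeff (ellPS ^ (j + 1)) =
          (PowerSeries.constantCoeff ellPS) ^ (j + 1) := map_pow _ _ _
      rw [← PowerSeries.coeff_zero_eq_constantCoeff_apply] at this
      rw [this]
      have h0 : PowerSeries.constantCoeff ellPS = 0 := by
        rw [← PowerSeries.coeff_zero_eq_constantCoeff_apply, coeff_ellPS]; simp
      rw [h0, zero_pow (Nat.succ_ne_zero j)]
      rw [ascPochhammer_zero]
      simp [Polynomial.coeff_one]
    | succ n ihn =>
      have hrec := ell_pow_rec j n
      rw [ihn, ih n] at hrec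
      have hn1 : ((n : ℝ) + 1) ≠ 0 := by positivity
      have key : PowerSeries.coeff (n + 1) (ellPS ^ (j + 1)) =
          ((n : ℝ) * ((j+1).factorial * ((ascPochhammer ℕ n).coeff (j+1) : ℝ) / n.factorial)
            + ((j : ℝ) + 1) * (j.factorial * ((ascPochhammer ℕ n).coeff j : ℝ) / n.factorial))
            / ((n : ℝ) + 1) := by
        field_simp at hrec ⊢
        linarith [hrec]
      rw [key, stirling_rec]
      have hfn : ((n.factorial : ℝ)) ≠ 0 := Nat.cast_ne_zero.mpr (Nat.factorial_ne_zero n)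
      rw [Nat.factorial_succ (n), Nat.factorial_succ j]
      push_cast
      field_simp
      ring

lemma logPMF_eq (p : ℝ) (m : ℕ) :
    logPMF p m = PowerSeries.coeff m ellPS * p ^ m / (-Real.log (1 - p)) := by
  rw [logPMF, coeff_ellPS]
  split
  · simp
  · rename_i h
    have hm : (m : ℝ) ≠ 0 := Nat.cast_ne_zero.mpr h
    rw [neg_div, ← div_neg]
    field_simp

lemma logConvPow_eq_coeff (p : ℝ) (j x : ℕ) :
    logConvPow p j x =
      PowerSeries.coeff x (ellPS ^ j) * p ^ x / (-Real.log (1 - p)) ^ j := by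
  induction j generalizing x with
  | zero =>
    rw [logConvPow, pow_zero, pow_zero, PowerSeries.coeff_one]
    split <;> simp_all
  | succ j ih =>
    rw [logConvPow]
    have step : ∀ k ∈ Finset.range (x + 1),
        logConvPow p j k * logPMF p (x - k) =
          (PowerSeries.coeff k (ellPS ^ j) * PowerSeries.coeff (x - k) ellPS)
            * p ^ x / (-Real.log (1 - p)) ^ (j + 1) := by
      intro k hk
      rw [Finset.mem_range, Nat.lt_succ_iff] at hk
      rw [ih, logPMF_eq]
      have hpk : p ^ k * p ^ (x - k) = p ^ x := by
        rw [← pow_add, Nat.add_sub_cancel' hk]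
      rw [div_mul_div_comm, mul_mul_mul_comm, hpk, pow_succ]
    rw [Finset.sum_congr rfl step, ← Finset.sum_div, ← Finset.sum_mul]
    congr 2
    rw [pow_succ, PowerSeries.coeff_mul,
      Finset.Nat.sum_antidiagonal_eq_sum_range_succ_mk]

/-- Closed form of the convolution powers of the logarithmic pmf, with `L = −log(1−p)`:
`g_p^{*j}(x) = j! · c(x,j) · pˣ / (x! · Lʲ)`, where `c(x,j)` (the unsigned Stirling
number of the first kind) is the coefficient of degree `j` of `ascPochhammer ℕ x`. -/
theorem logConvPow_eq_stirling (p : ℝ) (hp : p ∈ Set.Ioo (0:ℝ) 1) (j x : ℕ) :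
    logConvPow p j x =
      (j.factorial : ℝ) * ((ascPochhammer ℕ x).coeff j : ℝ) * p ^ x /
        ((x.factorial : ℝ) * (-Real.log (1 - p)) ^ j) := by
  rw [logConvPow_eq_coeff, coeff_ellPS_pow]
  ring
end

section
/- (Theorem 2, part 1: compound-Poisson representation of the negative binomial, pmf form.) Let r > 0 be real, p ∈ (0,1), and set λ = −r·log(1−p) > 0. Then for every x ∈ ℕ: Σ_{j=0}^{x} (e^{−λ} · λʲ / j!) · g_p^{*j}(x) = f_{r,p}(x). That is, if l ∼ Poisson(λ) and X is the sum of l i.i.d. Log(p) variables, then X ∼ NB(r,p). -/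
/-- `g^{*j}(x) = 0` for `x < j`. -/
lemma logConvPow_eq_zero (p : ℝ) : ∀ j x : ℕ, x < j → logConvPow p j x = 0 := by
  intro j
  induction j with
  | zero => intro x hx; omega
  | succ j ih =>
    intro x hx
    rw [logConvPow]
    apply Finset.sum_eq_zero
    intro k hk
    rw [Finset.mem_range] at hk
    rcases lt_or_ge k j with h | h
    · rw [ih k h, zero_mul]
    · have hkx : k = x ∧ k = j := by omega
      have : x - k = 0 := by omega
      rw [this, logPMF]
      simp

/-- Shift lemma for convolutions. -/
lemma logConvPow_shift (p : ℝ) (j x m : ℕ) (hm : m ≤ x) :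
    ∑ k ∈ Finset.Ico m (x + 1), logConvPow p j (k - m) * logPMF p (x - k) =
      logConvPow p (j + 1) (x - m) := by
  rw [Finset.sum_Ico_eq_sum_range]
  have h1 : x + 1 - m = (x - m) + 1 := by omega
  rw [h1, logConvPow]
  apply Finset.sum_congr rfl
  intro k hk
  rw [Finset.mem_range] at hk
  congr 2
  · omega
  · omega

/-- Symmetry identity: `x · g^{*(j+1)}(x) = (j+1) · Σ_k k·g(k)·g^{*j}(x-k)`. -/
lemma logConvPow_mul_x (p : ℝ) : ∀ (j x : ℕ),
    (x : ℝ) * logConvPow p (j + 1) x =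
      ((j : ℝ) + 1) * ∑ k ∈ Finset.range (x + 1),
        (k : ℝ) * logPMF p k * logConvPow p j (x - k) := by
  intro j
  induction j with
  | zero =>
    intro x
    have h1 : logConvPow p 1 x = logPMF p x := by
      rw [logConvPow, Finset.sum_eq_single 0]
      · simp [logConvPow]
      · intro k hk hk0
        rw [logConvPow]
        simp [hk0]
      · intro h; simp at h
    have h2 : ∑ k ∈ Finset.range (x + 1), (k : ℝ) * logPMF p k * logConvPow p 0 (x - k) =
        (x : ℝ) * logPMF p x := by
      rw [Finset.sum_eq_single x]
      · simp [logConvPow]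
      · intro k hk hkx
        rw [Finset.mem_range] at hk
        have : x - k ≠ 0 := by omega
        rw [logConvPow]
        simp [this]
      · intro h; simp at h
    rw [h1, h2]; ring
  | succ j ih =>
    intro x
    -- LHS = Σ_k (k + (x-k)) C_{j+1}(k) g(x-k)
    rw [logConvPow]
    rw [Finset.mul_sum]
    have hsplit : ∀ k ∈ Finset.range (x + 1),
        (x : ℝ) * (logConvPow p (j + 1) k * logPMF p (x - k)) =
          ((k : ℝ) * logConvPow p (j + 1) k) * logPMF p (x - k) +
          (((x - k : ℕ) : ℝ) * logPMF p (x - k)) * logConvPow p (j + 1) k := by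
      intro k hk
      rw [Finset.mem_range] at hk
      have hx : (x : ℝ) = (k : ℝ) + ((x - k : ℕ) : ℝ) := by
        push_cast [Nat.cast_sub (by omega : k ≤ x)]; ring
      rw [hx]; ring
    rw [Finset.sum_congr rfl hsplit, Finset.sum_add_distrib]
    -- second term: reflect
    have hrefl : ∑ k ∈ Finset.range (x + 1),
        (((x - k : ℕ) : ℝ) * logPMF p (x - k)) * logConvPow p (j + 1) k =
        ∑ m ∈ Finset.range (x + 1),
          (m : ℝ) * logPMF p m * logConvPow p (j + 1) (x - m) := by
      have := Finset.sum_range_reflect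
        (fun m => (m : ℝ) * logPMF p m * logConvPow p (j + 1) (x - m)) (x + 1)
      rw [← this]
      apply Finset.sum_congr rfl
      intro k hk
      rw [Finset.mem_range] at hk
      have h1 : x + 1 - 1 - k = x - k := by omega
      have h2 : x - (x - k) = k := by omega
      rw [h1, h2]
    rw [hrefl]
    -- first term: apply IH then swap sums
    have hfirst : ∑ k ∈ Finset.range (x + 1),
        ((k : ℝ) * logConvPow p (j + 1) k) * logPMF p (x - k) =
        ((j : ℝ) + 1) * ∑ m ∈ Finset.range (x + 1),
          (m : ℝ) * logPMF p m * logConvPow p (j + 1) (x - m) := by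
      have step1 : ∀ k ∈ Finset.range (x + 1),
          ((k : ℝ) * logConvPow p (j + 1) k) * logPMF p (x - k) =
          ((j : ℝ) + 1) * ∑ m ∈ Finset.range (x + 1),
            (if m ≤ k then (m : ℝ) * logPMF p m * logConvPow p j (k - m) * logPMF p (x - k)
             else 0) := by
        intro k hk
        rw [Finset.mem_range] at hk
        rw [ih k, mul_assoc]
        congr 1
        rw [Finset.sum_mul]
        rw [← Finset.sum_subset (Finset.range_subset_range.mpr (by omega : k + 1 ≤ x + 1))]
        · apply Finset.sum_congr rfl
          intro m hm
          rw [Finset.mem_range] at hm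
          rw [if_pos (by omega : m ≤ k)]
        · intro m hm hm'
          rw [Finset.mem_range] at hm
          rw [Finset.mem_range, not_lt] at hm'
          rw [if_neg (by omega)]
      rw [Finset.sum_congr rfl step1, ← Finset.mul_sum]
      congr 1
      rw [Finset.sum_comm]
      apply Finset.sum_congr rfl
      intro m hm
      rw [Finset.mem_range] at hm
      have hfilter : ∑ k ∈ Finset.range (x + 1),
          (if m ≤ k then (m : ℝ) * logPMF p m * logConvPow p j (k - m) * logPMF p (x - k)
           else 0) =
          ∑ k ∈ Finset.Ico m (x + 1),
            (m : ℝ) * logPMF p m * logConvPow p j (k - m) * logPMF p (x - k) := by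
        rw [← Finset.sum_filter]
        apply Finset.sum_congr
        · ext k
          simp only [Finset.mem_filter, Finset.mem_range, Finset.mem_Ico]
          omega
        · intro k _; rfl
      rw [hfilter]
      have : ∑ k ∈ Finset.Ico m (x + 1),
          (m : ℝ) * logPMF p m * logConvPow p j (k - m) * logPMF p (x - k) =
          (m : ℝ) * logPMF p m *
            ∑ k ∈ Finset.Ico m (x + 1), logConvPow p j (k - m) * logPMF p (x - k) := by
        rw [Finset.mul_sum]
        apply Finset.sum_congr rfl
        intro k _; ring
      rw [this, logConvPow_shift p j x m (by omega)]
    rw [hfirst]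
    push_cast
    ring

/-- The compound Poisson pmf. -/
noncomputable def cpPMF (r p : ℝ) (y : ℕ) : ℝ :=
  ∑ j ∈ Finset.range (y + 1),
    (Real.exp (-(-r * Real.log (1 - p))) * (-r * Real.log (1 - p)) ^ j /
        (j.factorial : ℝ)) * logConvPow p j y

lemma cpPMF_ext (r p : ℝ) (y N : ℕ) (hN : y + 1 ≤ N) :
    ∑ j ∈ Finset.range N,
      (Real.exp (-(-r * Real.log (1 - p))) * (-r * Real.log (1 - p)) ^ j /
          (j.factorial : ℝ)) * logConvPow p j y = cpPMF r p y := by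
  rw [cpPMF, ← Finset.sum_subset (Finset.range_subset_range.mpr hN)]
  intro j hj hj'
  rw [Finset.mem_range, not_lt] at hj'
  rw [logConvPow_eq_zero p j y (by omega), mul_zero]

/-- Panjer recursion for the compound Poisson pmf. -/
lemma cpPMF_panjer (r p : ℝ) (hr : 0 < r) (hp : p ∈ Set.Ioo (0:ℝ) 1) (x : ℕ) (hx : 0 < x) :
    (x : ℝ) * cpPMF r p x =
      r * ∑ k ∈ Finset.range x, p ^ (k + 1) * cpPMF r p (x - (k + 1)) := by
  obtain ⟨hp0, hp1⟩ := hp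
  have hlog : Real.log (1 - p) < 0 := Real.log_neg (by linarith) (by linarith)
  have hlogne : Real.log (1 - p) ≠ 0 := ne_of_lt hlog
  set lam : ℝ := -r * Real.log (1 - p) with hlam
  set w : ℕ → ℝ := fun j => Real.exp (-lam) * lam ^ j / (j.factorial : ℝ) with hw
  have hwstep : ∀ j : ℕ, w (j + 1) * ((j : ℝ) + 1) = lam * w j := by
    intro j
    simp only [hw, Nat.factorial_succ]
    have hfac : (j.factorial : ℝ) ≠ 0 := Nat.cast_ne_zero.mpr j.factorial_ne_zero
    have hj1 : ((j : ℝ) + 1) ≠ 0 := by positivity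
    push_cast
    field_simp
    ring
  have key : (x : ℝ) * cpPMF r p x =
      lam * ∑ j ∈ Finset.range x, w j *
        ∑ k ∈ Finset.range (x + 1), (k : ℝ) * logPMF p k * logConvPow p j (x - k) := by
    rw [cpPMF, Finset.mul_sum, Finset.sum_range_succ']
    have h0 : (x : ℝ) * (w 0 * logConvPow p 0 x) = 0 := by
      rw [logConvPow, if_neg (by omega : ¬ x = 0)]
      ring
    rw [h0, add_zero, Finset.mul_sum]
    apply Finset.sum_congr rfl
    intro j _
    rw [show (x : ℝ) * (w (j + 1) * logConvPow p (j + 1) x) =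
        w (j + 1) * ((x : ℝ) * logConvPow p (j + 1) x) by ring]
    rw [logConvPow_mul_x p j x, ← mul_assoc, hwstep j, mul_assoc]
  rw [key]
  -- swap the sums
  have swap : ∑ j ∈ Finset.range x, w j *
        ∑ k ∈ Finset.range (x + 1), (k : ℝ) * logPMF p k * logConvPow p j (x - k) =
      ∑ k ∈ Finset.range (x + 1), (k : ℝ) * logPMF p k *
        ∑ j ∈ Finset.range x, w j * logConvPow p j (x - k) := by
    simp_rw [Finset.mul_sum]
    rw [Finset.sum_comm]
    apply Finset.sum_congr rfl
    intro k _
    apply Finset.sum_congr rfl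
    intro j _
    ring
  rw [swap, Finset.sum_range_succ']
  simp only [Nat.cast_zero, zero_mul, add_zero]
  rw [Finset.mul_sum, Finset.mul_sum]
  apply Finset.sum_congr rfl
  intro k hk
  rw [Finset.mem_range] at hk
  have hinner : ∑ j ∈ Finset.range x, w j * logConvPow p j (x - (k + 1)) =
      cpPMF r p (x - (k + 1)) := by
    rw [← cpPMF_ext r p (x - (k + 1)) x (by omega)]
  rw [hinner]
  have hg : logPMF p (k + 1) = -(p ^ (k + 1)) / (((k : ℝ) + 1) * Real.log (1 - p)) := by
    rw [logPMF]
    simp [Nat.cast_add]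
  rw [hg, hlam]
  have hk1 : ((k : ℝ) + 1) ≠ 0 := by positivity
  push_cast
  field_simp

/-- The Gamma-coefficient identity `x·C(x) = r·Σ_{m<x} C(m)`. -/
lemma gammaCoeff_rec (r : ℝ) (hr : 0 < r) : ∀ x : ℕ,
    (x : ℝ) * (Real.Gamma ((x : ℝ) + r) / ((x.factorial : ℝ) * Real.Gamma r)) =
      r * ∑ m ∈ Finset.range x,
        Real.Gamma ((m : ℝ) + r) / ((m.factorial : ℝ) * Real.Gamma r) := by
  intro x
  induction x with
  | zero => simp
  | succ x ih =>
    rw [Finset.sum_range_succ, mul_add, ← ih]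
    have hG : Real.Gamma (((x : ℕ) + 1 : ℕ) + r) = ((x : ℝ) + r) * Real.Gamma ((x : ℝ) + r) := by
      have : (((x : ℕ) + 1 : ℕ) : ℝ) + r = ((x : ℝ) + r) + 1 := by push_cast; ring
      rw [this, Real.Gamma_add_one (by positivity)]
    rw [hG]
    have hfac : ((x + 1).factorial : ℝ) = ((x : ℝ) + 1) * (x.factorial : ℝ) := by
      rw [Nat.factorial_succ]; push_cast; ring
    rw [hfac]
    have hfne : (x.factorial : ℝ) ≠ 0 := Nat.cast_ne_zero.mpr x.factorial_ne_zero
    have hGr : Real.Gamma r ≠ 0 := ne_of_gt (Real.Gamma_pos_of_pos hr)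
    have hx1 : ((x : ℝ) + 1) ≠ 0 := by positivity
    push_cast
    field_simp

/-- The negative binomial satisfies the same recursion as the compound Poisson pmf. -/
lemma nbPMF_rec (r p : ℝ) (hr : 0 < r) (hp : p ∈ Set.Ioo (0:ℝ) 1) (x : ℕ) (hx : 0 < x) :
    (x : ℝ) * nbPMF r p x =
      r * ∑ k ∈ Finset.range x, p ^ (k + 1) * nbPMF r p (x - (k + 1)) := by
  have hsum : ∑ k ∈ Finset.range x, p ^ (k + 1) * nbPMF r p (x - (k + 1)) =
      p ^ x * (1 - p) ^ r * ∑ m ∈ Finset.range x,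
        Real.Gamma ((m : ℝ) + r) / ((m.factorial : ℝ) * Real.Gamma r) := by
    have refl : ∑ m ∈ Finset.range x,
          Real.Gamma ((m : ℝ) + r) / ((m.factorial : ℝ) * Real.Gamma r) =
        ∑ k ∈ Finset.range x,
          Real.Gamma (((x - (k + 1) : ℕ) : ℝ) + r) /
            (((x - (k + 1) : ℕ).factorial : ℝ) * Real.Gamma r) := by
      rw [← Finset.sum_range_reflect]
      apply Finset.sum_congr rfl
      intro k hk
      rw [Finset.mem_range] at hk
      congr 2 <;> rw [(by omega : x - 1 - k = x - (k + 1))]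
    rw [refl, Finset.mul_sum]
    apply Finset.sum_congr rfl
    intro k hk
    rw [Finset.mem_range] at hk
    rw [nbPMF]
    have hpow : p ^ x = p ^ (k + 1) * p ^ (x - (k + 1)) := by
      rw [← pow_add]
      congr 1
      omega
    rw [hpow]
    ring
  rw [hsum, nbPMF]
  rw [show (x : ℝ) * (Real.Gamma ((x : ℝ) + r) / ((x.factorial : ℝ) * Real.Gamma r) *
        p ^ x * (1 - p) ^ r) =
      ((x : ℝ) * (Real.Gamma ((x : ℝ) + r) / ((x.factorial : ℝ) * Real.Gamma r))) *
        (p ^ x * (1 - p) ^ r) by ring]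
  rw [gammaCoeff_rec r hr x]
  ring

lemma cpPMF_eq_nbPMF (r p : ℝ) (hr : 0 < r) (hp : p ∈ Set.Ioo (0:ℝ) 1) :
    ∀ x : ℕ, cpPMF r p x = nbPMF r p x := by
  intro x
  induction x using Nat.strong_induction_on with
  | _ x ih =>
    rcases Nat.eq_zero_or_pos x with h0 | hx
    · subst h0
      obtain ⟨hp0, hp1⟩ := hp
      have h1p : (0:ℝ) < 1 - p := by linarith
      have hGr : Real.Gamma r ≠ 0 := ne_of_gt (Real.Gamma_pos_of_pos hr)
      have hexp : Real.exp (-(-r * Real.log (1 - p))) = (1 - p) ^ r := by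
        rw [Real.rpow_def_of_pos h1p]; congr 1; ring
      have hexp2 : Real.exp (r * Real.log (1 - p)) = (1 - p) ^ r := by
        rw [Real.rpow_def_of_pos h1p]; congr 1; ring
      rw [cpPMF, nbPMF, Finset.range_one, Finset.sum_singleton, logConvPow]
      simp [hexp, hexp2, div_self hGr]
    · have h1 := cpPMF_panjer r p hr hp x hx
      have h2 := nbPMF_rec r p hr hp x hx
      have h3 : ∑ k ∈ Finset.range x, p ^ (k + 1) * cpPMF r p (x - (k + 1)) =
          ∑ k ∈ Finset.range x, p ^ (k + 1) * nbPMF r p (x - (k + 1)) := by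
        apply Finset.sum_congr rfl
        intro k hk
        rw [Finset.mem_range] at hk
        rw [ih (x - (k + 1)) (by omega)]
      have hxne : (x : ℝ) ≠ 0 := Nat.cast_ne_zero.mpr (by omega)
      apply mul_left_cancel₀ hxne
      rw [h1, h2, h3]

/-- Compound-Poisson representation of the negative binomial distribution (pmf form):
with `λ = −r·log(1−p)`, for every `x ∈ ℕ`,
`Σ_{j=0}^{x} (e^{−λ} · λʲ / j!) · g_p^{*j}(x) = f_{r,p}(x)`.
(The sum may stop at `j = x` since `g_p^{*j}(x) = 0` for `j > x ≥ 1`.) -/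
theorem negBinomial_eq_compound_poisson_log (r p : ℝ) (hr : 0 < r)
    (hp : p ∈ Set.Ioo (0:ℝ) 1) (x : ℕ) :
    ∑ j ∈ Finset.range (x + 1),
        (Real.exp (-(-r * Real.log (1 - p))) * (-r * Real.log (1 - p)) ^ j /
            (j.factorial : ℝ)) * logConvPow p j x =
      nbPMF r p x := by
  exact cpPMF_eq_nbPMF r p hr hp x
end

section
/- (Theorem 2, part 2: Poisson–logarithmic joint count distribution factorizes as negative binomial times Chinese restaurant table distribution.) Let r > 0 be real, p ∈ (0,1), λ = −r·log(1−p), and let x, j ∈ ℕ with x ≥ 1. Then (e^{−λ} · λʲ / j!) · g_p^{*j}(x) = f_{r,p}(x) · ( c(x,j) · rʲ / P_x(r) ), where P_x(r) = r·(r+1)⋯(r+x−1) is the ascending factorial (the evaluation at r of ascPochhammer ℝ x) and c(x,j)·rʲ/P_x(r) is the pmf of the Chinese restaurant table distribution CRT(x, r). Hence the bivariate count (X, l) of the compound-Poisson representation can equivalently be generated as X ∼ NB(r,p) followed by l ∼ CRT(X, r). -/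
open Polynomial Finset


noncomputable def stc (x j : ℕ) : ℕ := (ascPochhammer ℕ x).coeff j
lemma stc_zero (x : ℕ) : stc x 0 = if x = 0 then 1 else 0 := by
  rw [stc, Polynomial.coeff_zero_eq_eval_zero, ascPochhammer_eval_zero]
lemma stc_rec (x j : ℕ) : stc (x+1) (j+1) = stc x j + x * stc x (j+1) := by
  rw [stc, stc, stc, ascPochhammer_succ_right, mul_add, coeff_add, coeff_mul_X]
  congr 1
  rw [← Polynomial.C_eq_natCast, Polynomial.coeff_mul_C, mul_comm]
  norm_cast
lemma stc_diag (x : ℕ) : stc 0 x = if x = 0 then 1 else 0 := by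
  rw [stc, ascPochhammer_zero]
  cases x <;> simp [Polynomial.coeff_one]
lemma stc_one (x : ℕ) : stc (x+1) 1 = x.factorial := by
  induction x with
  | zero => simp [stc, ascPochhammer_one]
  | succ n ih =>
    rw [stc_rec, ih, stc_zero]
    simp [Nat.factorial_succ]
lemma weight (x k : ℕ) (h : k ≤ x) :
    (x+1).choose k * (x+1-k).factorial = (x+1) * (x.choose k * (x-k).factorial) := by
  apply Nat.eq_of_mul_eq_mul_right (Nat.factorial_pos k)
  have h1 := Nat.choose_mul_factorial_mul_factorial (show k ≤ x+1 by omega)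
  have h2 := Nat.choose_mul_factorial_mul_factorial h
  calc (x+1).choose k * (x+1-k).factorial * k.factorial
      = (x+1).choose k * k.factorial * (x+1-k).factorial := by ring
    _ = (x+1).factorial := h1
    _ = (x+1) * x.factorial := Nat.factorial_succ x
    _ = (x+1) * (x.choose k * k.factorial * (x-k).factorial) := by rw [h2]
    _ = (x+1) * (x.choose k * (x-k).factorial) * k.factorial := by ring
lemma lemA (x j : ℕ) :
    ∑ k ∈ range (x+1), x.choose k * (x-k).factorial * stc k j = stc (x+1) (j+1) := by
  induction x generalizing j with
  | zero => simp [stc_diag, stc, ascPochhammer_one, Polynomial.coeff_X, Polynomial.coeff_one]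
  | succ n ih =>
    rw [Finset.sum_range_succ]
    have : ∀ k ∈ range (n+1), (n+1).choose k * (n+1-k).factorial * stc k j
        = (n+1) * (n.choose k * (n-k).factorial * stc k j) := by
      intro k hk
      rw [Finset.mem_range] at hk
      rw [weight n k (by omega)]
      ring
    rw [Finset.sum_congr rfl this, ← Finset.mul_sum, ih, Nat.choose_self, Nat.sub_self]
    conv_rhs => rw [stc_rec]
    simp [Nat.factorial]
    ring

lemma lemA_real (x j : ℕ) :
    ∑ k ∈ range (x+1), ((x.choose k : ℝ) * (x-k).factorial * stc k j) = stc (x+1) (j+1) := by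
  exact_mod_cast congrArg (Nat.cast (R := ℝ)) (lemA x j)

lemma lemD (x : ℕ) : ∀ j : ℕ,
    ∑ k ∈ range x, ((x.choose k : ℝ) * ((x-k-1).factorial) * stc k j)
      = (j+1) * stc x (j+1) := by
  induction x with
  | zero => intro j; simp [stc_diag]
  | succ n ih =>
    intro j
    have hidx : ∀ k ∈ range (n+1), ((n+1).choose k : ℝ) * ((n+1-k-1).factorial) * stc k j
        = ((n+1).choose k : ℝ) * ((n-k).factorial) * stc k j := by
      intro k hk
      have h : n+1-k-1 = n-k := by omega
      rw [h]
    rw [Finset.sum_congr rfl hidx, Finset.sum_range_succ']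
    cases j with
    | zero =>
      have hz : ∀ k ∈ range n, (((n+1).choose (k+1) : ℝ)) * ((n-(k+1)).factorial) * stc (k+1) 0 = 0 := by
        intro k hk
        rw [stc_zero]
        simp
      rw [Finset.sum_congr rfl hz]
      simp [stc_zero, stc_one]
    | succ m =>
      -- split each term of the shifted sum
      have hsplit : ∀ k ∈ range n,
          (((n+1).choose (k+1) : ℝ)) * ((n-(k+1)).factorial) * stc (k+1) (m+1)
          = ((n.choose k : ℝ) * ((n-k-1).factorial) * stc k m
              + (k : ℝ) * ((n.choose k : ℝ) * ((n-k-1).factorial) * stc k (m+1)))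
            + ((n.choose (k+1) : ℝ) * ((n-(k+1)).factorial) * stc (k+1) (m+1)) := by
        intro k hk
        have h1 : (n+1).choose (k+1) = n.choose k + n.choose (k+1) := Nat.choose_succ_succ n k
        have h2 : stc (k+1) (m+1) = stc k m + k * stc k (m+1) := stc_rec k m
        have h3 : n - (k+1) = n - k - 1 := by omega
        rw [h1, h2, h3]
        push_cast
        ring
      rw [Finset.sum_congr rfl hsplit, Finset.sum_add_distrib, Finset.sum_add_distrib]
      set A' := ∑ k ∈ range n, ((n.choose k : ℝ) * ((n-k-1).factorial) * stc k m) with hA'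
      set B' := ∑ k ∈ range n, ((k : ℝ) * ((n.choose k : ℝ) * ((n-k-1).factorial) * stc k (m+1))) with hB'
      set C' := ∑ k ∈ range n, ((n.choose (k+1) : ℝ) * ((n-(k+1)).factorial) * stc (k+1) (m+1)) with hC'
      set F := ∑ k ∈ range n, ((n.choose k : ℝ) * ((n-k).factorial) * stc k (m+1)) with hF'
      have hA : A' = (m+1) * stc n (m+1) := ih m
      have hBF : B' + F = (n : ℝ) * ((m+2) * stc n (m+2)) := by
        rw [hB', hF', ← Finset.sum_add_distrib]
        have : ∀ k ∈ range n,
            ((k : ℝ) * ((n.choose k : ℝ) * ((n-k-1).factorial) * stc k (m+1))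
              + (n.choose k : ℝ) * ((n-k).factorial) * stc k (m+1))
            = (n : ℝ) * ((n.choose k : ℝ) * ((n-k-1).factorial) * stc k (m+1)) := by
          intro k hk
          rw [Finset.mem_range] at hk
          have hfac : ((n-k).factorial : ℝ) = (n - k : ℕ) * ((n-k-1).factorial : ℝ) := by
            rw [← Nat.cast_mul]
            congr 1
            exact (Nat.mul_factorial_pred (by omega)).symm
          rw [hfac]
          have hnk : ((n - k : ℕ) : ℝ) = (n : ℝ) - k := by
            push_cast [Nat.cast_sub (le_of_lt hk)]
            ring
          rw [hnk]
          ring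
        rw [Finset.sum_congr rfl this, ← Finset.mul_sum]
        rw [ih (m+1)]
        push_cast
        ring
      have hC : C' + ((n.choose 0 : ℝ) * ((n-0).factorial) * stc 0 (m+1)) = stc (n+1) (m+2) := by
        have := lemA_real n (m+1)
        rw [Finset.sum_range_succ'] at this
        convert this using 2
      have hF2 : F = (n : ℝ) * stc n (m+2) := by
        have h4 := lemA_real n (m+1)
        rw [Finset.sum_range_succ] at h4
        have h5 : ((stc (n+1) (m+2) : ℕ) : ℝ) = (stc n (m+1) : ℝ) + (n : ℝ) * stc n (m+2) := by
          rw [stc_rec]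
          push_cast
          ring
        simp only [Nat.choose_self, Nat.sub_self, Nat.factorial_zero] at h4
        rw [h5] at h4
        push_cast at h4 ⊢
        linarith
      have hrec : ((stc (n+1) (m+2) : ℕ) : ℝ) = (stc n (m+1) : ℝ) + (n : ℝ) * stc n (m+2) := by
        rw [stc_rec]; push_cast; ring
      push_cast
      simp only [Nat.choose_zero_right, Nat.cast_one] at hC ⊢
      linear_combination hA + hBF - hF2 + hC - ((m : ℝ)+1) * hrec

lemma logConvPow_eq (p : ℝ) (hp : p ∈ Set.Ioo (0:ℝ) 1) (j : ℕ) : ∀ x : ℕ,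
    logConvPow p j x
      = (j.factorial : ℝ) * stc x j / x.factorial * p ^ x / (-Real.log (1-p))^j := by
  obtain ⟨hp0, hp1⟩ := hp
  have h1p : (0:ℝ) < 1 - p := by linarith
  have hL : Real.log (1 - p) < 0 := Real.log_neg h1p (by linarith)
  have hLne : Real.log (1 - p) ≠ 0 := ne_of_lt hL
  induction j with
  | zero =>
    intro x
    rw [logConvPow]
    rcases x with _ | s
    · simp [stc_diag]
    · rw [stc_zero]
      simp
  | succ j ih =>
    intro x
    rw [logConvPow, Finset.sum_range_succ]
    have hlast : logPMF p (x - x) = 0 := by simp [logPMF]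
    rw [hlast, mul_zero, add_zero]
    have hterm : ∀ k ∈ range x, logConvPow p j k * logPMF p (x - k)
        = ((j.factorial : ℝ) * p^x / ((-Real.log (1-p))^(j+1) * x.factorial))
            * ((x.choose k : ℝ) * ((x-k-1).factorial) * stc k j) := by
      intro k hk
      rw [Finset.mem_range] at hk
      rw [ih, logPMF, if_neg (by omega)]
      have hfact : (x.choose k : ℝ) * ((x-k-1).factorial) * ((k.factorial : ℝ) * ((x - k : ℕ) : ℝ))
          = (x.factorial : ℝ) := by
        rw [← Nat.cast_mul, ← Nat.cast_mul, ← Nat.cast_mul]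
        congr 1
        have h1 : (x - k) * (x-k-1).factorial = (x-k).factorial :=
          Nat.mul_factorial_pred (by omega)
        calc x.choose k * (x-k-1).factorial * (k.factorial * (x - k))
            = x.choose k * k.factorial * ((x-k) * (x-k-1).factorial) := by ring
          _ = x.choose k * k.factorial * (x-k).factorial := by rw [h1]
          _ = x.factorial := Nat.choose_mul_factorial_mul_factorial (le_of_lt hk)
      have hpk : p ^ k * p ^ (x - k) = p ^ x := by
        rw [← pow_add]
        congr 1
        omega
      have hxk : ((x - k : ℕ) : ℝ) ≠ 0 := Nat.cast_ne_zero.mpr (by omega)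
      have hkf : (k.factorial : ℝ) ≠ 0 := Nat.cast_ne_zero.mpr (Nat.factorial_ne_zero k)
      have hxf : (x.factorial : ℝ) ≠ 0 := Nat.cast_ne_zero.mpr (Nat.factorial_ne_zero x)
      have hLj : (-Real.log (1-p))^j ≠ 0 := pow_ne_zero _ (by simpa using hLne)
      rw [pow_succ]
      field_simp
      linear_combination
        ((stc k j : ℝ) * p^x) * hfact - ((stc k j : ℝ) * x.factorial) * hpk
    rw [Finset.sum_congr rfl hterm, ← Finset.mul_sum, lemD x j]
    have hfs : (Nat.factorial (j+1) : ℝ) = (j+1) * j.factorial := by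
      rw [Nat.factorial_succ]; push_cast; ring
    rw [hfs]
    have hLpow : (-Real.log (1-p))^(j+1) ≠ 0 := pow_ne_zero _ (by simpa using hLne)
    have hxf : (x.factorial : ℝ) ≠ 0 := Nat.cast_ne_zero.mpr (Nat.factorial_ne_zero x)
    field_simp


/-- Poisson–logarithmic joint count distribution factorizes as negative binomial times
the Chinese restaurant table distribution: with `λ = −r·log(1−p)`, for `x ≥ 1`,
`(e^{−λ}·λʲ/j!) · g_p^{*j}(x) = f_{r,p}(x) · (c(x,j)·rʲ / P_x(r))`,
where `P_x(r)` is the ascending factorial `r·(r+1)⋯(r+x−1)` and `c(x,j)` the unsigned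
Stirling number of the first kind. -/
theorem poisson_log_eq_negBinomial_mul_crt (r p : ℝ) (hr : 0 < r)
    (hp : p ∈ Set.Ioo (0:ℝ) 1) (x j : ℕ) (hx : 1 ≤ x) :
    (Real.exp (-(-r * Real.log (1 - p))) * (-r * Real.log (1 - p)) ^ j /
        (j.factorial : ℝ)) * logConvPow p j x =
      nbPMF r p x *
        (((ascPochhammer ℕ x).coeff j : ℝ) * r ^ j / (ascPochhammer ℝ x).eval r) := by
  obtain ⟨hp0, hp1⟩ := hp
  have h1p : (0:ℝ) < 1 - p := by linarith
  have hL : Real.log (1 - p) < 0 := Real.log_neg h1p (by linarith)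
  have hGamma : ∀ n : ℕ, Real.Gamma ((n : ℝ) + r) = (ascPochhammer ℝ n).eval r * Real.Gamma r := by
    intro n
    induction n with
    | zero => simp
    | succ n ihn =>
      have h : ((n+1 : ℕ) : ℝ) + r = ((n:ℝ) + r) + 1 := by push_cast; ring
      rw [h, Real.Gamma_add_one (by positivity), ihn, ascPochhammer_succ_eval]
      ring
  rw [logConvPow_eq p ⟨hp0, hp1⟩ j x, nbPMF, hGamma x]
  have hstc : ((ascPochhammer ℕ x).coeff j : ℝ) = (stc x j : ℝ) := rfl
  rw [hstc]
  have hexp : Real.exp (-(-r * Real.log (1 - p))) = (1-p)^r := by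
    rw [Real.rpow_def_of_pos h1p]
    congr 1
    ring
  have hpow : (-r * Real.log (1 - p)) ^ j = r ^ j * (-Real.log (1 - p)) ^ j := by
    rw [← mul_pow]
    congr 1
    ring
  rw [hexp, hpow]
  have hGr : Real.Gamma r ≠ 0 := (Real.Gamma_pos_of_pos hr).ne'
  have hasc : (ascPochhammer ℝ x).eval r ≠ 0 := (ascPochhammer_pos x r hr).ne'
  have hLj : (-Real.log (1-p))^j ≠ 0 := pow_ne_zero _ (neg_ne_zero.mpr (ne_of_lt hL))
  have hjf : (j.factorial : ℝ) ≠ 0 := Nat.cast_ne_zero.mpr (Nat.factorial_ne_zero j)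
  have hxf : (x.factorial : ℝ) ≠ 0 := Nat.cast_ne_zero.mpr (Nat.factorial_ne_zero x)
  field_simp
end
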